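/- Let X be an integer-valued random variable with finite variance Var(X). Then the Shannon entropy of X satisfies H(X) ≤ (1/2)·log₂(2πe·(Var(X) + 1/12)). -/

import Mathlib

open MeasureTheory ProbabilityTheory

lemma gibbs_term {p q : ℝ} (hp : 0 ≤ p) (hq : 0 < q) :
    p * Real.log q - p * Real.log p ≤ q - p := by
  rcases eq_or_lt_of_le hp with h | h
  · simp [← h, hq.le]
  · have h1 : Real.log (q / p) ≤ q / p - 1 := Real.log_le_sub_one_of_pos (div_pos hq h)
    have h2 : Real.log (q / p) = Real.log q - Real.log p := Real.log_div hq.ne' h.ne'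
    rw [h2] at h1
    have := mul_le_mul_of_nonneg_left h1 h.le
    calc p * Real.log q - p * Real.log p = p * (Real.log q - Real.log p) := by ring
      _ ≤ p * (q / p - 1) := this
      _ = q - p := by field_simp

lemma jensen_interval (c s2 : ℝ) (hs : 0 < s2) :
    Real.exp (-(c ^ 2 + c + 1 / 3) / (2 * s2)) ≤
      ∫ x in Set.Ioc (0 : ℝ) 1, Real.exp (-(c + x) ^ 2 / (2 * s2)) := by
  haveI hprob : IsProbabilityMeasure (volume.restrict (Set.Ioc (0 : ℝ) 1)) :=
    ⟨by rw [Measure.restrict_apply_univ]; simp⟩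
  have hf : Integrable (fun x : ℝ => -(c + x) ^ 2 / (2 * s2))
      (volume.restrict (Set.Ioc (0 : ℝ) 1)) :=
    (Continuous.integrableOn_Ioc (by continuity))
  have hgf : Integrable (fun x : ℝ => Real.exp (-(c + x) ^ 2 / (2 * s2)))
      (volume.restrict (Set.Ioc (0 : ℝ) 1)) :=
    (Continuous.integrableOn_Ioc (by continuity))
  have key := convexOn_exp.map_average_le Real.continuous_exp.continuousOn isClosed_univ
    (Filter.Eventually.of_forall fun x => Set.mem_univ _) hf hgf
  rw [average_eq_integral, average_eq_integral] at key
  have hx2 : (∫ x in (0 : ℝ)..1, (c + x) ^ 2) = c ^ 2 + c + 1 / 3 := by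
    rw [intervalIntegral.integral_comp_add_left (fun y => y ^ 2) c, integral_pow]
    push_cast
    ring
  have hint : (∫ x in Set.Ioc (0 : ℝ) 1, -(c + x) ^ 2 / (2 * s2))
      = -(c ^ 2 + c + 1 / 3) / (2 * s2) := by
    rw [← intervalIntegral.integral_of_le (by norm_num : (0:ℝ) ≤ 1)]
    have : (∫ x in (0 : ℝ)..1, -(c + x) ^ 2 / (2 * s2))
        = (∫ x in (0 : ℝ)..1, (c + x) ^ 2) * (-(2 * s2)⁻¹) := by
      rw [← intervalIntegral.integral_mul_const]
      apply intervalIntegral.integral_congr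
      intro x _
      field_simp
    rw [this, hx2]
    field_simp
  rw [hint] at key
  exact key

lemma fiber_tsum {Ω : Type*} [MeasurableSpace Ω] (μ : Measure Ω) [IsProbabilityMeasure μ]
    (X : Ω → ℤ) (hX : Measurable X) (g : ℤ → ℝ) (hg : ∀ k, 0 ≤ g k)
    (hint : Integrable (fun ω => g (X ω)) μ) :
    Summable (fun k => ((μ.map X) {k}).toReal * g k) ∧
      (∑' k, ((μ.map X) {k}).toReal * g k) = ∫ ω, g (X ω) ∂μ := by
  have hgm : AEStronglyMeasurable g (μ.map X) :=
    (measurable_of_countable g).aestronglyMeasurable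
  have hmap : Integrable g (μ.map X) := by
    rwa [integrable_map_measure hgm hX.aemeasurable]
  have hInt : ∫ x, g x ∂(μ.map X) = ∑' k, ((μ.map X) {k}).toReal • g k :=
    integral_countable' hmap
  have hIntMap : ∫ x, g x ∂(μ.map X) = ∫ ω, g (X ω) ∂μ :=
    integral_map hX.aemeasurable hgm
  have hsum : Summable (fun k => ((μ.map X) {k}).toReal * g k) := by
    apply summable_of_sum_le (c := ∫ x, g x ∂(μ.map X))
    · intro k
      exact mul_nonneg ENNReal.toReal_nonneg (hg k)
    · intro u
      have h1 : ∑ k ∈ u, ((μ.map X) {k}).toReal * g k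
          = ∫ x in (u : Set ℤ), g x ∂(μ.map X) := by
        rw [integral_finset u hmap.integrableOn]
        simp [smul_eq_mul, measureReal_def]
      rw [h1]
      exact setIntegral_le_integral hmap (Filter.Eventually.of_forall hg)
  refine ⟨hsum, ?_⟩
  rw [← hIntMap, hInt]
  simp [smul_eq_mul]

lemma gibbs_tsum {p q : ℤ → ℝ} (hp0 : ∀ k, 0 ≤ p k) (hq0 : ∀ k, 0 < q k)
    (hsp : Summable p) (hsq : Summable q)
    (hplq : Summable fun k => p k * Real.log (q k))
    (hplp : Summable fun k => p k * Real.log (p k))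
    (hqp : (∑' k, q k) ≤ ∑' k, p k) :
    -∑' k, p k * Real.log (p k) ≤ -∑' k, p k * Real.log (q k) := by
  have h1 : (∑' k, (p k * Real.log (q k) - p k * Real.log (p k))) ≤
      ∑' k, (q k - p k) :=
    Summable.tsum_le_tsum (fun k => gibbs_term (hp0 k) (hq0 k)) (hplq.sub hplp) (hsq.sub hsp)
  rw [Summable.tsum_sub hplq hplp, Summable.tsum_sub hsq hsp] at h1
  linarith

lemma gaussian_discrete_sum_le_one (m s2 : ℝ) (hs2 : 0 < s2) :
    Summable (fun k : ℤ => (Real.sqrt (2 * Real.pi * s2))⁻¹ *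
      Real.exp (-(((k : ℝ) - m) ^ 2 + ((k : ℝ) - m) + 1 / 3) / (2 * s2))) ∧
    (∑' k : ℤ, (Real.sqrt (2 * Real.pi * s2))⁻¹ *
      Real.exp (-(((k : ℝ) - m) ^ 2 + ((k : ℝ) - m) + 1 / 3) / (2 * s2))) ≤ 1 := by
  set C := Real.sqrt (2 * Real.pi * s2) with hCdef
  have hCpos : 0 < C := Real.sqrt_pos.mpr (by positivity)
  set q : ℤ → ℝ := fun k =>
    C⁻¹ * Real.exp (-(((k : ℝ) - m) ^ 2 + ((k : ℝ) - m) + 1 / 3) / (2 * s2)) with hqdef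
  have hq0 : ∀ k, 0 < q k := fun k => by positivity
  have hGeq : (fun x : ℝ => Real.exp (-(x - m) ^ 2 / (2 * s2)))
      = fun x => Real.exp (-(2 * s2)⁻¹ * (x - m) ^ 2) := by
    funext x
    congr 1
    field_simp
  have hGint : Integrable (fun x : ℝ => Real.exp (-(x - m) ^ 2 / (2 * s2))) := by
    rw [hGeq]
    exact (integrable_exp_neg_mul_sq (by positivity : (0:ℝ) < (2 * s2)⁻¹)).comp_sub_right m
  have hGtot : (∫ x : ℝ, Real.exp (-(x - m) ^ 2 / (2 * s2))) = C := by
    rw [hGeq,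
      integral_sub_right_eq_self (fun x => Real.exp (-(2 * s2)⁻¹ * x ^ 2)) m,
      integral_gaussian, hCdef]
    congr 1
    field_simp
  have hr : HasSum (fun k : ℤ => ∫ x in (k : ℝ)..((k : ℝ) + 1),
      Real.exp (-(x - m) ^ 2 / (2 * s2))) C := by
    have h := hGint.hasSum_intervalIntegral 0
    rw [hGtot] at h
    simpa using h
  have hqle : ∀ k : ℤ, q k ≤ C⁻¹ * ∫ x in (k : ℝ)..((k : ℝ) + 1),
      Real.exp (-(x - m) ^ 2 / (2 * s2)) := by
    intro k
    have hj := jensen_interval ((k : ℝ) - m) s2 hs2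
    have heq : (∫ x in (k : ℝ)..((k : ℝ) + 1), Real.exp (-(x - m) ^ 2 / (2 * s2)))
        = ∫ x in Set.Ioc (0 : ℝ) 1, Real.exp (-(((k : ℝ) - m) + x) ^ 2 / (2 * s2)) := by
      have h2 := intervalIntegral.integral_comp_add_left
        (a := (0:ℝ)) (b := 1) (fun y => Real.exp (-(y - m) ^ 2 / (2 * s2))) (k : ℝ)
      simp only [add_zero] at h2
      rw [← h2, ← intervalIntegral.integral_of_le (by norm_num : (0:ℝ) ≤ 1)]
      have h3 : ∀ x : ℝ, ((k:ℝ) - m) + x = (k:ℝ) + x - m := fun x => by ring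
      simp_rw [h3]
    rw [heq]
    exact mul_le_mul_of_nonneg_left hj (by positivity)
  have hr' : HasSum (fun k : ℤ => C⁻¹ * ∫ x in (k : ℝ)..((k : ℝ) + 1),
      Real.exp (-(x - m) ^ 2 / (2 * s2))) 1 := by
    have h := hr.mul_left C⁻¹
    rwa [inv_mul_cancel₀ hCpos.ne'] at h
  have hsum_q : Summable q :=
    Summable.of_nonneg_of_le (fun k => (hq0 k).le) hqle hr'.summable
  refine ⟨hsum_q, ?_⟩
  calc (∑' k, q k) ≤ ∑' k : ℤ, (C⁻¹ * ∫ x in (k : ℝ)..((k : ℝ) + 1),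
      Real.exp (-(x - m) ^ 2 / (2 * s2))) := Summable.tsum_le_tsum hqle hsum_q hr'.summable
    _ = 1 := hr'.tsum_eq

set_option maxHeartbeats 1000000 in
theorem massey_entropy_bound {Ω : Type*} [MeasurableSpace Ω] (μ : Measure Ω)
    [IsProbabilityMeasure μ] (X : Ω → ℤ) (hX : Measurable X)
    (hVar : MemLp (fun ω => (X ω : ℝ)) 2 μ) :
    -∑' k : ℤ, (μ {ω | X ω = k}).toReal * Real.logb 2 (μ {ω | X ω = k}).toReal ≤
      (1 / 2) * Real.logb 2 (2 * Real.pi * Real.exp 1 *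
        (variance (fun ω => (X ω : ℝ)) μ + 1 / 12)) := by
  classical
  haveI : IsProbabilityMeasure (μ.map X) := Measure.isProbabilityMeasure_map hX.aemeasurable
  have hgoalset : ∀ k : ℤ, μ {ω | X ω = k} = μ.map X {k} := by
    intro k
    rw [Measure.map_apply hX (measurableSet_singleton k)]
    rfl
  simp only [hgoalset]
  set p : ℤ → ℝ := fun k => (μ.map X {k}).toReal with hpdef
  have hp0 : ∀ k, 0 ≤ p k := fun k => ENNReal.toReal_nonneg
  set m0 := ∫ ω, (X ω : ℝ) ∂μ with hm0def
  set V := variance (fun ω => (X ω : ℝ)) μ with hVdef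
  have hV0 : 0 ≤ V := variance_nonneg _ μ
  set s2 := V + 1 / 12 with hs2def
  have hs2 : 0 < s2 := by rw [hs2def]; linarith
  set m := m0 + 1 / 2 with hmdef
  set a : ℤ → ℝ := fun k => ((k : ℝ) - m) ^ 2 + ((k : ℝ) - m) + 1 / 3 with hadef
  have ha0 : ∀ k, 0 ≤ a k := by
    intro k
    have h := sq_nonneg (((k : ℝ) - m) + 1 / 2)
    simp only [hadef]
    nlinarith
  -- integrability
  have hXint : Integrable (fun ω => (X ω : ℝ)) μ := hVar.integrable one_le_two
  have hX2int : Integrable (fun ω => (X ω : ℝ) ^ 2) μ := hVar.integrable_sq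
  have haeq : (fun ω => a (X ω)) =
      fun ω => (X ω : ℝ) ^ 2 + (1 - 2 * m) * (X ω : ℝ) + (m ^ 2 - m + 1 / 3) := by
    funext ω
    simp only [hadef]
    ring
  have haint : Integrable (fun ω => a (X ω)) μ := by
    rw [haeq]
    exact (hX2int.add (hXint.const_mul _)).add (integrable_const _)
  have hsqint : ∫ ω, (X ω : ℝ) ^ 2 ∂μ = V + m0 ^ 2 := by
    have hvd := variance_eq_sub hVar
    simp only [Pi.pow_apply] at hvd
    rw [hVdef, hvd, hm0def]
    ring
  have i3 : Integrable (fun ω => (1 - 2 * m) * (X ω : ℝ)) μ := hXint.const_mul _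
  have i1 : Integrable (fun ω => (X ω : ℝ) ^ 2 + (1 - 2 * m) * (X ω : ℝ)) μ := hX2int.add i3
  have i2 : Integrable (fun _ : Ω => (m ^ 2 - m + 1 / 3 : ℝ)) μ := integrable_const _
  have hmean : ∫ ω, a (X ω) ∂μ = s2 := by
    rw [haeq, integral_add i1 i2, integral_add hX2int i3, integral_const_mul, hsqint,
      integral_const]
    simp only [measureReal_def, measure_univ, ENNReal.toReal_one, smul_eq_mul, one_mul]
    rw [← hm0def, hmdef, hs2def]
    ring
  -- fiber sums
  obtain ⟨hsum1, htsum1⟩ := fiber_tsum μ X hX (fun _ => (1 : ℝ))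
    (fun _ => zero_le_one) (integrable_const 1)
  have hsum_p : Summable p := by simpa using hsum1
  have htsum_p : (∑' k, p k) = 1 := by
    have h1 : (∫ ω, (1 : ℝ) ∂μ) = 1 := by simp
    rw [h1] at htsum1
    simpa using htsum1
  obtain ⟨hsum_pa, htsum_pa⟩ := fiber_tsum μ X hX a ha0 haint
  rw [hmean] at htsum_pa
  -- the Gaussian comparison sequence
  set C := Real.sqrt (2 * Real.pi * s2) with hCdef
  have hCpos : 0 < C := Real.sqrt_pos.mpr (by positivity)
  set q : ℤ → ℝ := fun k =>
    C⁻¹ * Real.exp (-(((k : ℝ) - m) ^ 2 + ((k : ℝ) - m) + 1 / 3) / (2 * s2)) with hqdef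
  have hq0 : ∀ k, 0 < q k := fun k => by positivity
  obtain ⟨hsum_q, htsum_q⟩ := gaussian_discrete_sum_le_one m s2 hs2
  -- log of q
  have hlogq : ∀ k, Real.log (q k) = -Real.log C - a k / (2 * s2) := by
    intro k
    rw [hqdef]
    simp only
    rw [Real.log_mul (by positivity) (Real.exp_ne_zero _), Real.log_inv, Real.log_exp,
      hadef]
    ring
  have hplq_eq : (fun k => p k * Real.log (q k)) =
      fun k => (-Real.log C) * p k - (1 / (2 * s2)) * (p k * a k) := by
    funext k
    rw [hlogq k]
    ring
  have hsum_plq : Summable fun k => p k * Real.log (q k) := by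
    rw [hplq_eq]
    exact (hsum_p.mul_left _).sub (hsum_pa.mul_left _)
  have htsum_plq : (∑' k, p k * Real.log (q k)) = -Real.log C - 1 / 2 := by
    rw [hplq_eq, Summable.tsum_sub (hsum_p.mul_left _) (hsum_pa.mul_left _),
      tsum_mul_left, tsum_mul_left, htsum_p, htsum_pa]
    field_simp
  -- reduce to natural log
  have hlog2 : (0 : ℝ) < Real.log 2 := Real.log_pos one_lt_two
  have hgoal_lhs : (∑' k : ℤ, p k * Real.logb 2 (p k))
      = (∑' k, p k * Real.log (p k)) / Real.log 2 := by
    rw [← tsum_div_const]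
    congr 1
    funext k
    rw [← Real.log_div_log, mul_div_assoc]
  rw [hgoal_lhs, ← Real.log_div_log]
  rw [show -((∑' k, p k * Real.log (p k)) / Real.log 2)
      = (-∑' k, p k * Real.log (p k)) / Real.log 2 by ring,
    show (1:ℝ)/2 * (Real.log (2 * Real.pi * Real.exp 1 * s2) / Real.log 2)
      = ((1:ℝ)/2 * Real.log (2 * Real.pi * Real.exp 1 * s2)) / Real.log 2 by ring]
  rw [div_le_div_iff_of_pos_right hlog2]
  -- final RHS value
  have hRHS : (1:ℝ)/2 * Real.log (2 * Real.pi * Real.exp 1 * s2) = Real.log C + 1/2 := by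
    have h1 : 2 * Real.pi * Real.exp 1 * s2 = (2 * Real.pi * s2) * Real.exp 1 := by ring
    rw [h1, Real.log_mul (by positivity) (Real.exp_ne_zero _), Real.log_exp,
      hCdef, Real.log_sqrt (by positivity)]
    ring
  rw [hRHS]
  by_cases hS : Summable fun k => p k * Real.log (p k)
  · have hgibbs := gibbs_tsum hp0 hq0 hsum_p hsum_q hsum_plq hS
      (by rw [htsum_p]; exact htsum_q)
    rw [htsum_plq] at hgibbs
    linarith
  · rw [tsum_eq_zero_of_not_summable hS]
    have hx : (0:ℝ) < 2 * Real.pi * s2 := by positivity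
    have h2 : (2:ℝ) ≤ Real.exp 1 := by nlinarith [Real.exp_one_gt_d9]
    have he : Real.exp (-1) ≤ 1/2 := by
      rw [Real.exp_neg]
      have := inv_anti₀ (by norm_num : (0:ℝ) < 2) h2
      linarith
    have h1 : Real.exp (-1) ≤ 2 * Real.pi * s2 := by
      have hpi := Real.pi_gt_three
      rw [hs2def]
      nlinarith
    have hlog : -1 ≤ Real.log (2 * Real.pi * s2) := (Real.le_log_iff_exp_le hx).mpr h1
    have hlogC : Real.log C = Real.log (2 * Real.pi * s2) / 2 := by
      rw [hCdef, Real.log_sqrt (by positivity)]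
    linarith
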